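/- For any graph G, the minimum degree of the Federico graph satisfies δ(F(G)) = δ(G) + 1. -/

import Mathlib

open SimpleGraph

/-- A proper colouring with `k` colours. -/
def IsProperCol {V : Type*} (G : SimpleGraph V) {k : ℕ} (c : V → Fin k) : Prop :=
  ∀ ⦃x y⦄, G.Adj x y → c x ≠ c y

/-- Every vertex belongs to a rainbow neighbourhood: its closed neighbourhood
meets every colour class. -/
def IsRainbowCol {V : Type*} (G : SimpleGraph V) {k : ℕ} (c : V → Fin k) : Prop :=
  ∀ v (i : Fin k), ∃ u, (u = v ∨ G.Adj v u) ∧ c u = i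

/-- `G` admits a J-colouring. -/
def JColorable {V : Type*} (G : SimpleGraph V) : Prop :=
  ∃ (k : ℕ) (c : V → Fin k), IsProperCol G c ∧ IsRainbowCol G c

/-- The J-colouring number of `G` is `k`: there is a proper rainbow colouring with `k`
colours, and `k` is maximal with this property. -/
def JNum {V : Type*} (G : SimpleGraph V) (k : ℕ) : Prop :=
  (∃ c : V → Fin k, IsProperCol G c ∧ IsRainbowCol G c) ∧
    ∀ m, (∃ c : V → Fin m, IsProperCol G c ∧ IsRainbowCol G c) → m ≤ k

/-- The Mycielskian of `G`: vertices `Sum.inl i = vᵢ`, `Sum.inr (Sum.inl i) = uᵢ`,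
`Sum.inr (Sum.inr ()) = w`. -/
def mycielskian {V : Type*} (G : SimpleGraph V) : SimpleGraph (V ⊕ V ⊕ Unit) :=
  SimpleGraph.fromRel (fun a b => match a, b with
    | Sum.inl i, Sum.inl j => G.Adj i j
    | Sum.inl i, Sum.inr (Sum.inl j) => G.Adj i j
    | Sum.inr (Sum.inl _), Sum.inr (Sum.inr _) => True
    | _, _ => False)

/-- The Federico graph of `G`: vertices `Sum.inl i = vᵢ`, `Sum.inr (Sum.inl i) = uᵢ`,
`Sum.inr (Sum.inr i) = wᵢ`; edges `vᵢvⱼ`, `wᵢwⱼ`, `uᵢwⱼ` whenever `vᵢvⱼ ∈ E(G)`,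
plus `vᵢuᵢ` for each `i`. -/
def federico {V : Type*} (G : SimpleGraph V) : SimpleGraph (V ⊕ V ⊕ V) :=
  SimpleGraph.fromRel (fun a b => match a, b with
    | Sum.inl i, Sum.inl j => G.Adj i j
    | Sum.inr (Sum.inr i), Sum.inr (Sum.inr j) => G.Adj i j
    | Sum.inr (Sum.inl i), Sum.inr (Sum.inr j) => G.Adj i j
    | Sum.inl i, Sum.inr (Sum.inl j) => i = j
    | _, _ => False)

set_option linter.unusedSectionVars false
section Aux
variable {V : Type*} [Fintype V] [DecidableEq V] (G : SimpleGraph V) [DecidableRel G.Adj]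
  [DecidableRel (federico G).Adj]

lemma fed_adj (a b : V ⊕ V ⊕ V) : (federico G).Adj a b ↔ a ≠ b ∧
    ((match a, b with
    | Sum.inl i, Sum.inl j => G.Adj i j
    | Sum.inr (Sum.inr i), Sum.inr (Sum.inr j) => G.Adj i j
    | Sum.inr (Sum.inl i), Sum.inr (Sum.inr j) => G.Adj i j
    | Sum.inl i, Sum.inr (Sum.inl j) => i = j
    | _, _ => False) ∨ (match b, a with
    | Sum.inl i, Sum.inl j => G.Adj i j
    | Sum.inr (Sum.inr i), Sum.inr (Sum.inr j) => G.Adj i j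
    | Sum.inr (Sum.inl i), Sum.inr (Sum.inr j) => G.Adj i j
    | Sum.inl i, Sum.inr (Sum.inl j) => i = j
    | _, _ => False)) := SimpleGraph.fromRel_adj _ a b

lemma fed_deg_inl (i : V) : (federico G).degree (Sum.inl i) = G.degree i + 1 := by
  rw [SimpleGraph.degree]
  have : (federico G).neighborFinset (Sum.inl i) =
      insert (Sum.inr (Sum.inl i)) ((G.neighborFinset i).map ⟨Sum.inl, Sum.inl_injective⟩) := by
    ext x
    rcases x with j | j | j <;>
      simp [SimpleGraph.mem_neighborFinset, fed_adj, G.adj_comm, eq_comm,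
        fun hj : G.Adj i j => G.ne_of_adj hj]
    · intro hj; exact G.ne_of_adj hj
  rw [this, Finset.card_insert_of_notMem (by simp), Finset.card_map]
  rfl

lemma fed_deg_u (i : V) : (federico G).degree (Sum.inr (Sum.inl i)) = G.degree i + 1 := by
  rw [SimpleGraph.degree]
  have : (federico G).neighborFinset (Sum.inr (Sum.inl i)) =
      insert (Sum.inl i) ((G.neighborFinset i).map
        ⟨fun j => Sum.inr (Sum.inr j), fun a b hab => by simpa using hab⟩) := by
    ext x
    rcases x with j | j | j <;>
      simp [SimpleGraph.mem_neighborFinset, fed_adj, G.adj_comm, eq_comm, DFunLike.coe]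
  rw [this, Finset.card_insert_of_notMem (by simp), Finset.card_map]
  rfl

lemma fed_deg_w (i : V) : (federico G).degree (Sum.inr (Sum.inr i)) = 2 * G.degree i := by
  rw [SimpleGraph.degree]
  have : (federico G).neighborFinset (Sum.inr (Sum.inr i)) =
      ((G.neighborFinset i).map
        ⟨fun j => Sum.inr (Sum.inl j), fun a b hab => by simpa using hab⟩) ∪
      ((G.neighborFinset i).map
        ⟨fun j => Sum.inr (Sum.inr j), fun a b hab => by simpa using hab⟩) := by
    ext x
    rcases x with j | j | j <;>
      simp [SimpleGraph.mem_neighborFinset, fed_adj, G.adj_comm, DFunLike.coe]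
    · intro hj; exact G.ne_of_adj hj
  rw [this, Finset.card_union_of_disjoint (by simp [Finset.disjoint_left, DFunLike.coe]),
    Finset.card_map, Finset.card_map]
  rw [SimpleGraph.degree]; ring

end Aux

/-- For a graph `G` with no isolated vertices, `δ(F(G)) = δ(G) + 1`. -/
theorem federico_minDegree {V : Type*} [Fintype V] [Nonempty V] (G : SimpleGraph V)
    [DecidableRel G.Adj] (h : 1 ≤ G.minDegree) :
    @SimpleGraph.minDegree (V ⊕ V ⊕ V) (federico G) _ (Classical.decRel _) =
      G.minDegree + 1 := by
  classical
  apply le_antisymm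
  · obtain ⟨v, hv⟩ := G.exists_minimal_degree_vertex
    have h1 := SimpleGraph.minDegree_le_degree (federico G) (Sum.inl v)
    rw [fed_deg_inl] at h1
    omega
  · apply SimpleGraph.le_minDegree_of_forall_le_degree
    rintro (i | i | i)
    · rw [fed_deg_inl]; have := G.minDegree_le_degree i; omega
    · rw [fed_deg_u]; have := G.minDegree_le_degree i; omega
    · rw [fed_deg_w]; have := G.minDegree_le_degree i; omega
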